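/- Let b be a positive integer and let γ_{0,b,0} be the permutation of {1,…,b+1} whose one-line notation is b, b−1, …, 2, 1, b+1. Then for all n ≥ 1, |S_n(123, 132, γ_{0,b,0})| = F_{b,n+1}. -/

import Mathlib

/-- `π` contains `σ` as a pattern: there is a subsequence of `π` (in one-line notation)
whose entries are in the same relative order as those of `σ`. -/
def PContains {n k : ℕ} (π : Equiv.Perm (Fin n)) (σ : Equiv.Perm (Fin k)) : Prop :=
  ∃ f : Fin k → Fin n, StrictMono f ∧ ∀ s t : Fin k, π (f s) < π (f t) ↔ σ s < σ t

/-- `π` avoids the pattern `σ`. -/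
def PAvoids {n k : ℕ} (π : Equiv.Perm (Fin n)) (σ : Equiv.Perm (Fin k)) : Prop :=
  ¬ PContains π σ

/-- The k-generalized Fibonacci numbers: `genFib k n = F_{k,n}`, with
`F_{k,n} = 0` for `n ≤ 0`, `F_{k,1} = 1`, and `F_{k,n} = ∑_{i=1}^k F_{k,n-i}` for `n ≥ 2`
(terms with nonpositive index being `0`). -/
def genFib (k : ℕ) : ℕ → ℕ
  | 0 => 0
  | 1 => 1
  | n + 2 => ∑ i ∈ Finset.range k, genFib k (n + 1 - i)
decreasing_by omega

/-- The pattern 123 (the identity permutation of `{1,2,3}`). -/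
def p123 : Equiv.Perm (Fin 3) := Equiv.refl (Fin 3)

/-- The pattern 132 (one-line notation `1,3,2`, zero-indexed `0,2,1`). -/
noncomputable def p132 : Equiv.Perm (Fin 3) := Equiv.ofBijective ![0, 2, 1] (by decide)

/-- Let `γ = γ_{0,b,0}` be the permutation of `{1,…,b+1}` with one-line notation
`b, b-1, …, 2, 1, b+1` (zero-indexed: `γ i = b - 1 - i` for `i < b` and `γ b = b`).
Then for `n ≥ 1`, `|S_n(123, 132, γ_{0,b,0})| = F_{b,n+1}`. -/
def Q1 {n : ℕ} (π : Equiv.Perm (Fin n)) : Prop :=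
  ∀ i j k : Fin n, i < j → j < k → π i < π j → π k < π i

def HasG (b : ℕ) {n : ℕ} (π : Equiv.Perm (Fin n)) : Prop :=
  ∃ f : Fin (b+1) → Fin n, StrictMono f ∧
    (∀ s t : Fin (b+1), s < t → (t:ℕ) < b → π (f t) < π (f s)) ∧
    (∀ s : Fin (b+1), (s:ℕ) < b → π (f s) < π (f (Fin.last b)))

def Good (b : ℕ) {n : ℕ} (π : Equiv.Perm (Fin n)) : Prop := Q1 π ∧ ¬ HasG b π

def ftop {n : ℕ} (h : 1 ≤ n) : Fin n := ⟨n-1, by omega⟩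

section decomp
variable {n : ℕ} {π : Equiv.Perm (Fin n)}

lemma ftop_max (π : Equiv.Perm (Fin n)) (i : Fin n) : (π i : ℕ) ≤ n - 1 := by
  have := (π i).isLt; omega

lemma val_lt_top (hn : 1 ≤ n) (i : Fin n) (hi : i ≠ π.symm (ftop hn)) :
    (π i : ℕ) < n - 1 := by
  have h1 : π i ≠ ftop hn := by
    intro h
    exact hi (by rw [← h, Equiv.symm_apply_apply])
  have h2 : (π i : ℕ) ≠ n - 1 := fun h => h1 (Fin.ext (by simpa [ftop] using h))
  have := ftop_max π i
  omega

lemma E1 (hn : 1 ≤ n) (hq : Q1 π) (i j : Fin n)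
    (hi : i < π.symm (ftop hn)) (hj : π.symm (ftop hn) < j) : π j < π i := by
  have h1 : π i < π (π.symm (ftop hn)) := by
    rw [Equiv.apply_symm_apply, Fin.lt_def]
    have := val_lt_top hn i (fun h => absurd hi (by rw [h]; exact lt_irrefl _))
    simp only [ftop]
    omega
  exact hq i (π.symm (ftop hn)) j hi hj h1

lemma E2 (hn : 1 ≤ n) (hq : Q1 π) (i j : Fin n) (hij : i < j)
    (hj : j < π.symm (ftop hn)) : π j < π i := by
  rcases lt_trichotomy (π i) (π j) with h | h | h
  · have h2 := hq i j (π.symm (ftop hn)) hij hj h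
    rw [Equiv.apply_symm_apply, Fin.lt_def] at h2
    have := ftop_max π i
    simp only [ftop] at h2
    omega
  · exact absurd (π.injective h) (fun hh => absurd hij (by rw [hh]; exact lt_irrefl _))
  · exact h

lemma card_filter_gt (p : ℕ) (hp : p < n) :
    (Finset.univ.filter (fun j : Fin n => p < (j:ℕ))).card = n - 1 - p := by
  have h : (Finset.univ.filter (fun j : Fin n => p < (j:ℕ))) = Finset.Ioi (⟨p, hp⟩ : Fin n) := by
    ext j; simp [Fin.lt_def]
  rw [h, Fin.card_Ioi]

/-- the value at any position before the max is at least n-1-p -/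
lemma E3 (hn : 1 ≤ n) (hq : Q1 π) (x : Fin n) (hx : x < π.symm (ftop hn)) :
    n - 1 - (π.symm (ftop hn) : ℕ) ≤ (π x : ℕ) := by
  have hp : (π.symm (ftop hn) : ℕ) < n := (π.symm (ftop hn)).isLt
  have hsub : ∀ j ∈ Finset.univ.filter
      (fun j : Fin n => ((π.symm (ftop hn) : ℕ)) < (j:ℕ)), (π j : ℕ) ∈ Finset.range (π x : ℕ) := by
    intro j hj
    simp only [Finset.mem_filter, Finset.mem_univ, true_and] at hj
    simp only [Finset.mem_range]
    exact E1 hn hq x j hx (by rw [Fin.lt_def]; omega)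
  have hinj : Set.InjOn (fun j : Fin n => (π j : ℕ))
      (Finset.univ.filter (fun j : Fin n => ((π.symm (ftop hn) : ℕ)) < (j:ℕ))) := by
    intro a _ c _ h
    exact π.injective (Fin.ext h)
  have hcard := Finset.card_le_card_of_injOn _ hsub hinj
  rw [card_filter_gt _ hp, Finset.card_range] at hcard
  exact hcard

lemma chainlem (hn : 1 ≤ n) (hq : Q1 π) (d : ℕ) : ∀ (i j : Fin n), (j:ℕ) = (i:ℕ) + d →
    j < π.symm (ftop hn) → (π j : ℕ) + d ≤ (π i : ℕ) := by
  induction d with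
  | zero =>
    intro i j hij _
    rw [show i = j from Fin.ext (by omega)]
    omega
  | succ d ih =>
    intro i j hij hj
    have hjlt : (j:ℕ) < n := j.isLt
    obtain ⟨j', hj'⟩ : ∃ z : Fin n, (z:ℕ) = (i:ℕ) + d := ⟨⟨(i:ℕ) + d, by omega⟩, rfl⟩
    have hstep : π j < π j' := E2 hn hq j' j (by rw [Fin.lt_def]; omega)
      hj
    have hih := ih i j' hj' (lt_trans (show j' < j by rw [Fin.lt_def]; omega) hj)
    rw [Fin.lt_def] at hstep
    omega

lemma D1val (hn : 1 ≤ n) (hq : Q1 π) (i : Fin n) (hi : i < π.symm (ftop hn)) :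
    (π i : ℕ) = n - 2 - (i:ℕ) := by
  have hp : (π.symm (ftop hn) : ℕ) < n := (π.symm (ftop hn)).isLt
  rw [Fin.lt_def] at hi
  obtain ⟨z0, hz0⟩ : ∃ z : Fin n, (z:ℕ) = 0 := ⟨⟨0, by omega⟩, rfl⟩
  have hupper : (π i : ℕ) + (i:ℕ) ≤ (π z0 : ℕ) :=
    chainlem hn hq (i:ℕ) z0 i (by omega) (by rw [Fin.lt_def]; omega)
  have h0top : (π z0 : ℕ) < n - 1 :=
    val_lt_top hn z0 (fun h => by rw [← h] at hi; omega)
  obtain ⟨zp, hzp⟩ : ∃ z : Fin n, (z:ℕ) = (π.symm (ftop hn) : ℕ) - 1 :=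
    ⟨⟨(π.symm (ftop hn) : ℕ) - 1, by omega⟩, rfl⟩
  have hzplt : zp < π.symm (ftop hn) := by rw [Fin.lt_def]; omega
  have hlower : (π zp : ℕ) + ((π.symm (ftop hn) : ℕ) - 1 - (i:ℕ)) ≤ (π i : ℕ) :=
    chainlem hn hq _ i zp (by omega) hzplt
  have h3 := E3 hn hq zp hzplt
  omega

lemma D3val (hn : 1 ≤ n) (hq : Q1 π) (j : Fin n) (hj : π.symm (ftop hn) < j) :
    (π j : ℕ) < n - 1 - (π.symm (ftop hn) : ℕ) := by
  have hp : (π.symm (ftop hn) : ℕ) < n := (π.symm (ftop hn)).isLt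
  rw [Fin.lt_def] at hj
  rcases Nat.eq_zero_or_pos (π.symm (ftop hn) : ℕ) with h0 | h0
  · have := val_lt_top (π := π) hn j (fun h => by rw [h] at hj; omega)
    omega
  · obtain ⟨zp, hzp⟩ : ∃ z : Fin n, (z:ℕ) = (π.symm (ftop hn) : ℕ) - 1 :=
      ⟨⟨(π.symm (ftop hn) : ℕ) - 1, by omega⟩, rfl⟩
    have hzplt : zp < π.symm (ftop hn) := by rw [Fin.lt_def]; omega
    have h1 := E1 hn hq zp j hzplt (by rw [Fin.lt_def]; omega)
    have h2 := D1val hn hq zp hzplt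
    rw [Fin.lt_def] at h1
    omega

lemma D1lt {b : ℕ} (hn : 1 ≤ n) (hq : Q1 π) (hg : ¬ HasG b π) (hb : 1 ≤ b) :
    (π.symm (ftop hn) : ℕ) < b := by
  by_contra hcon
  push_neg at hcon
  have hp : (π.symm (ftop hn) : ℕ) < n := (π.symm (ftop hn)).isLt
  apply hg
  have hble : b + 1 ≤ n := by omega
  have hlb : ((Fin.last b : Fin (b+1)) : ℕ) = b := rfl
  refine ⟨fun s => if h : (s:ℕ) = b then π.symm (ftop hn)
    else Fin.castLE hble s, ?_, ?_, ?_⟩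
  · intro s t hst
    rw [Fin.lt_def] at hst
    have hs := s.isLt
    have ht := t.isLt
    simp only []
    split_ifs with h1 h2 h2
    · exact absurd hst (by omega)
    · exact absurd hst (by omega)
    · simp only [Fin.lt_def, Fin.coe_castLE]; omega
    · simp only [Fin.lt_def, Fin.coe_castLE]; omega
  · intro s t hst htb
    rw [Fin.lt_def] at hst
    have hs : (s:ℕ) < b := by omega
    simp only [dif_neg (by omega : ¬ (s:ℕ) = b), dif_neg (by omega : ¬ (t:ℕ) = b)]
    exact E2 hn hq _ _ (by simp only [Fin.lt_def, Fin.coe_castLE]; omega)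
      (by simp only [Fin.lt_def, Fin.coe_castLE]; omega)
  · intro s hsb
    simp only [dif_neg (by omega : ¬ (s:ℕ) = b), dif_pos hlb]
    rw [Equiv.apply_symm_apply]
    have hne : Fin.castLE hble s ≠ π.symm (ftop hn) := by
      intro hh
      have := congrArg Fin.val hh
      simp only [Fin.coe_castLE] at this
      omega
    have := val_lt_top hn _ hne
    rw [Fin.lt_def]
    simp only [ftop]
    omega

end decomp

section build
variable {n p : ℕ}

def buildFun (hp : p < n) (σ : Equiv.Perm (Fin (n-1-p))) : Fin n → Fin n :=
  fun i => if h1 : (i:ℕ) < p then ⟨n-2-(i:ℕ), by omega⟩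
    else if h2 : (i:ℕ) = p then ⟨n-1, by omega⟩
    else ⟨(σ ⟨(i:ℕ)-p-1, by have := i.isLt; omega⟩ : ℕ), by
      have := (σ ⟨(i:ℕ)-p-1, by have := i.isLt; omega⟩).isLt; omega⟩

lemma buildFun_lt (hp : p < n) (σ : Equiv.Perm (Fin (n-1-p))) (i : Fin n) (h : (i:ℕ) < p) :
    (buildFun hp σ i : ℕ) = n-2-(i:ℕ) := by
  simp only [buildFun, dif_pos h]

lemma buildFun_eq (hp : p < n) (σ : Equiv.Perm (Fin (n-1-p))) (i : Fin n) (h : (i:ℕ) = p) :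
    (buildFun hp σ i : ℕ) = n-1 := by
  simp only [buildFun]
  rw [dif_neg (by omega), dif_pos h]

lemma buildFun_gt (hp : p < n) (σ : Equiv.Perm (Fin (n-1-p))) (i : Fin n) (h : p < (i:ℕ))
    (hlt : (i:ℕ)-p-1 < n-1-p) :
    (buildFun hp σ i : ℕ) = (σ ⟨(i:ℕ)-p-1, hlt⟩ : ℕ) := by
  simp only [buildFun]
  rw [dif_neg (by omega), dif_neg (by omega)]

lemma buildFun_gt' (hp : p < n) (σ : Equiv.Perm (Fin (n-1-p))) (i : Fin n) (h : p < (i:ℕ)) :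
    (buildFun hp σ i : ℕ) < n-1-p := by
  rw [buildFun_gt hp σ i h (by have := i.isLt; omega)]
  exact (σ _).isLt

lemma buildFun_inj (hp : p < n) (σ : Equiv.Perm (Fin (n-1-p))) :
    Function.Injective (buildFun hp σ) := by
  intro a c h
  have ha := a.isLt
  have hc := c.isLt
  have hval := congrArg Fin.val h
  rcases lt_trichotomy (a:ℕ) p with h1 | h1 | h1 <;> rcases lt_trichotomy (c:ℕ) p with h2 | h2 | h2
  · rw [buildFun_lt hp σ a h1, buildFun_lt hp σ c h2] at hval
    exact Fin.ext (by omega)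
  · rw [buildFun_lt hp σ a h1, buildFun_eq hp σ c h2] at hval; omega
  · rw [buildFun_lt hp σ a h1] at hval
    have := buildFun_gt' hp σ c h2
    omega
  · rw [buildFun_eq hp σ a h1, buildFun_lt hp σ c h2] at hval; omega
  · exact Fin.ext (by omega)
  · rw [buildFun_eq hp σ a h1] at hval
    have := buildFun_gt' hp σ c h2
    omega
  · rw [buildFun_lt hp σ c h2] at hval
    have := buildFun_gt' hp σ a h1
    omega
  · rw [buildFun_eq hp σ c h2] at hval
    have := buildFun_gt' hp σ a h1
    omega
  · have hlta : (a:ℕ)-p-1 < n-1-p := by omega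
    have hltc : (c:ℕ)-p-1 < n-1-p := by omega
    rw [buildFun_gt hp σ a h1 hlta, buildFun_gt hp σ c h2 hltc] at hval
    have := congrArg Fin.val (σ.injective (Fin.ext hval))
    simp only [Fin.val_mk] at this
    exact Fin.ext (by omega)

noncomputable def buildPerm (hp : p < n) (σ : Equiv.Perm (Fin (n-1-p))) : Equiv.Perm (Fin n) :=
  Equiv.ofBijective _ (Finite.injective_iff_bijective.mp (buildFun_inj hp σ))

lemma buildPerm_apply (hp : p < n) (σ : Equiv.Perm (Fin (n-1-p))) (i : Fin n) :
    buildPerm hp σ i = buildFun hp σ i := rfl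

lemma buildPerm_symm_top (hn : 1 ≤ n) (hp : p < n) (σ : Equiv.Perm (Fin (n-1-p))) :
    ((buildPerm hp σ).symm (ftop hn) : ℕ) = p := by
  have h : buildPerm hp σ ⟨p, hp⟩ = ftop hn := by
    apply Fin.ext
    rw [buildPerm_apply, buildFun_eq hp σ _ rfl]
    rfl
  rw [← h, Equiv.symm_apply_apply]

lemma build_Q1 (hp : p < n) (σ : Equiv.Perm (Fin (n-1-p))) (hσ : Q1 σ) :
    Q1 (buildPerm hp σ) := by
  intro i j k hij hjk hlt
  rw [Fin.lt_def] at hij hjk hlt ⊢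
  simp only [buildPerm_apply] at hlt ⊢
  have hi := i.isLt
  have hj := j.isLt
  have hk := k.isLt
  rcases lt_trichotomy (i:ℕ) p with h1 | h1 | h1
  · -- i in prefix; π j > π i forces j = p, so k > p
    have hji : p ≤ (j:ℕ) := by
      by_contra hcon
      push_neg at hcon
      rw [buildFun_lt hp σ i h1, buildFun_lt hp σ j hcon] at hlt
      omega
    have hjp : (j:ℕ) = p := by
      rcases Nat.eq_or_lt_of_le hji with h | h
      · omega
      · exfalso
        have := buildFun_gt' hp σ j h
        rw [buildFun_lt hp σ i h1] at hlt
        omega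
    have hkgt : p < (k:ℕ) := by omega
    have := buildFun_gt' hp σ k hkgt
    rw [buildFun_lt hp σ i h1]
    omega
  · -- i is position of max
    exfalso
    rw [buildFun_eq hp σ i h1] at hlt
    have := (buildFun hp σ j).isLt
    omega
  · -- i, j, k all in suffix
    have hjgt : p < (j:ℕ) := by omega
    have hkgt : p < (k:ℕ) := by omega
    have hlta : (i:ℕ)-p-1 < n-1-p := by omega
    have hltb : (j:ℕ)-p-1 < n-1-p := by omega
    have hltc : (k:ℕ)-p-1 < n-1-p := by omega
    rw [buildFun_gt hp σ i h1 hlta, buildFun_gt hp σ j hjgt hltb] at hlt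
    rw [buildFun_gt hp σ i h1 hlta, buildFun_gt hp σ k hkgt hltc]
    have := hσ ⟨(i:ℕ)-p-1, hlta⟩ ⟨(j:ℕ)-p-1, hltb⟩ ⟨(k:ℕ)-p-1, hltc⟩
      (by rw [Fin.lt_def]; simp only [Fin.val_mk]; omega)
      (by rw [Fin.lt_def]; simp only [Fin.val_mk]; omega)
      (by rw [Fin.lt_def]; exact hlt)
    rw [Fin.lt_def] at this
    exact this

lemma sm_val_le {k m : ℕ} {f : Fin k → Fin m} (hf : StrictMono f) (s : Fin k) :
    (s:ℕ) ≤ (f s : ℕ) := by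
  have : ∀ d : ℕ, ∀ s : Fin k, (s:ℕ) = d → d ≤ (f s : ℕ) := by
    intro d
    induction d with
    | zero => intro s _; exact Nat.zero_le _
    | succ d ih =>
      intro s hs
      have hd : d < k := by have := s.isLt; omega
      have h1 := ih ⟨d, hd⟩ rfl
      have h2 : f ⟨d, hd⟩ < f s := hf (by rw [Fin.lt_def]; simp only [Fin.val_mk]; omega)
      rw [Fin.lt_def] at h2
      omega
  exact this (s:ℕ) s rfl

lemma build_noHasG {b : ℕ} (hn : 1 ≤ n) (hp : p < n) (hpb : p < b)
    (σ : Equiv.Perm (Fin (n-1-p))) (hσ : ¬ HasG b σ) : ¬ HasG b (buildPerm hp σ) := by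
  rintro ⟨f, hf, hdec, hlast⟩
  have hb : 1 ≤ b := by omega
  have hs0 : (0:ℕ) < b + 1 := by omega
  set s0 : Fin (b+1) := ⟨0, hs0⟩ with hs0def
  rcases lt_trichotomy ((f s0):ℕ) p with h1 | h1 | h1
  · -- f s0 in prefix: then f (last) must be at position p, forcing b ≤ p, contradiction
    have hl := hlast s0 (by simp only [hs0def, Fin.val_mk]; omega)
    rw [Fin.lt_def, buildPerm_apply, buildPerm_apply] at hl
    have hfl : (f (Fin.last b) : ℕ) = p := by
      rcases lt_trichotomy ((f (Fin.last b)):ℕ) p with h2 | h2 | h2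
      · have hmono : f s0 < f (Fin.last b) := hf (by rw [Fin.lt_def]; simp [hs0def, Fin.last]; omega)
        rw [Fin.lt_def] at hmono
        rw [buildFun_lt hp σ _ h1, buildFun_lt hp σ _ h2] at hl
        omega
      · exact h2
      · exfalso
        have := buildFun_gt' hp σ _ h2
        rw [buildFun_lt hp σ _ h1] at hl
        omega
    have := sm_val_le hf (Fin.last b)
    simp only [Fin.val_last] at this
    omega
  · -- f s0 at max position: contradiction with hlast
    have hl := hlast s0 (by simp only [hs0def, Fin.val_mk]; omega)
    rw [Fin.lt_def, buildPerm_apply, buildPerm_apply, buildFun_eq hp σ _ h1] at hl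
    have := (buildFun hp σ (f (Fin.last b))).isLt
    omega
  · -- everything in suffix: transfer to σ
    have hall : ∀ s : Fin (b+1), p < (f s : ℕ) := by
      intro s
      rcases Nat.eq_zero_or_pos (s:ℕ) with h | h
      · rw [show s = s0 from Fin.ext (by simp [hs0def, h])]
        exact h1
      · have : f s0 < f s := hf (by rw [Fin.lt_def]; simp only [hs0def, Fin.val_mk]; omega)
        rw [Fin.lt_def] at this
        omega
    have hftlt : ∀ s : Fin (b+1), (f s : ℕ) - p - 1 < n-1-p := by
      intro s
      have := (f s).isLt
      have := hall s
      omega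
    apply hσ
    refine ⟨fun s => ⟨(f s : ℕ) - p - 1, hftlt s⟩, ?_, ?_, ?_⟩
    · intro s t hst
      have := hf hst
      rw [Fin.lt_def] at this ⊢
      simp only [Fin.val_mk]
      have := hall s
      omega
    · intro s t hst htb
      have hd := hdec s t hst htb
      rw [Fin.lt_def, buildPerm_apply, buildPerm_apply,
        buildFun_gt hp σ _ (hall t) (hftlt t), buildFun_gt hp σ _ (hall s) (hftlt s)] at hd
      rw [Fin.lt_def]
      exact hd
    · intro s hsb
      have hd := hlast s hsb
      rw [Fin.lt_def, buildPerm_apply, buildPerm_apply,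
        buildFun_gt hp σ _ (hall s) (hftlt s),
        buildFun_gt hp σ _ (hall (Fin.last b)) (hftlt (Fin.last b))] at hd
      rw [Fin.lt_def]
      exact hd

end build

section extract
variable {n : ℕ}

noncomputable def extFun (π : Equiv.Perm (Fin n)) (hn : 1 ≤ n) (hq : Q1 π) (p : ℕ)
    (hfp : (π.symm (ftop hn) : ℕ) = p) : Fin (n-1-p) → Fin (n-1-p) :=
  fun j =>
    let i : Fin n := ⟨p+1+(j:ℕ), by have := j.isLt; omega⟩
    ⟨(π i : ℕ), by
      have h := D3val hn hq i (by rw [Fin.lt_def]; simp only [i, Fin.val_mk]; omega)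
      omega⟩

lemma extFun_inj (π : Equiv.Perm (Fin n)) (hn : 1 ≤ n) (hq : Q1 π) (p : ℕ)
    (hfp : (π.symm (ftop hn) : ℕ) = p) : Function.Injective (extFun π hn hq p hfp) := by
  intro a c h
  have hval := congrArg Fin.val h
  simp only [extFun, Fin.val_mk] at hval
  have := congrArg Fin.val (π.injective (Fin.ext hval))
  simp only [Fin.val_mk] at this
  exact Fin.ext (by omega)

noncomputable def extPerm (π : Equiv.Perm (Fin n)) (hn : 1 ≤ n) (hq : Q1 π) (p : ℕ)
    (hfp : (π.symm (ftop hn) : ℕ) = p) : Equiv.Perm (Fin (n-1-p)) :=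
  Equiv.ofBijective _ (Finite.injective_iff_bijective.mp (extFun_inj π hn hq p hfp))

lemma extPerm_val (π : Equiv.Perm (Fin n)) (hn : 1 ≤ n) (hq : Q1 π) (p : ℕ)
    (hfp : (π.symm (ftop hn) : ℕ) = p) (j : Fin (n-1-p)) (pf : p+1+(j:ℕ) < n) :
    (extPerm π hn hq p hfp j : ℕ) = (π ⟨p+1+(j:ℕ), pf⟩ : ℕ) := by
  rw [extPerm, Equiv.ofBijective_apply, extFun]

lemma ext_Q1 (π : Equiv.Perm (Fin n)) (hn : 1 ≤ n) (hq : Q1 π) (p : ℕ)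
    (hfp : (π.symm (ftop hn) : ℕ) = p) : Q1 (extPerm π hn hq p hfp) := by
  intro i j k hij hjk hlt
  rw [Fin.lt_def] at hij hjk hlt ⊢
  have hi := i.isLt
  have hj := j.isLt
  have hk := k.isLt
  rw [extPerm_val π hn hq p hfp i (by omega), extPerm_val π hn hq p hfp j (by omega)] at hlt
  have e1 := extPerm_val π hn hq p hfp i (by omega : p+1+(i:ℕ) < n)
  have e2 := extPerm_val π hn hq p hfp k (by omega : p+1+(k:ℕ) < n)
  have hres := hq ⟨p+1+(i:ℕ), by omega⟩ ⟨p+1+(j:ℕ), by omega⟩ ⟨p+1+(k:ℕ), by omega⟩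
    (by rw [Fin.lt_def]; simp only [Fin.val_mk]; omega)
    (by rw [Fin.lt_def]; simp only [Fin.val_mk]; omega)
    (by rw [Fin.lt_def]; exact hlt)
  rw [Fin.lt_def] at hres
  omega

lemma ext_noHasG {b : ℕ} (π : Equiv.Perm (Fin n)) (hn : 1 ≤ n) (hq : Q1 π) (p : ℕ)
    (hfp : (π.symm (ftop hn) : ℕ) = p) (hg : ¬ HasG b π) :
    ¬ HasG b (extPerm π hn hq p hfp) := by
  rintro ⟨f, hf, hdec, hlast⟩
  apply hg
  have hbnd : ∀ s : Fin (b+1), p+1+((f s):ℕ) < n := fun s => by have := (f s).isLt; omega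
  refine ⟨fun s => ⟨p+1+((f s):ℕ), hbnd s⟩, ?_, ?_, ?_⟩
  · intro s t hst
    have := hf hst
    rw [Fin.lt_def] at this ⊢
    simp only [Fin.val_mk]
    omega
  · intro s t hst htb
    have hd := hdec s t hst htb
    rw [Fin.lt_def] at hd
    have e1 := extPerm_val π hn hq p hfp (f t) (hbnd t)
    have e2 := extPerm_val π hn hq p hfp (f s) (hbnd s)
    rw [Fin.lt_def]
    simp only [Fin.val_mk]
    omega
  · intro s hsb
    have hd := hlast s hsb
    rw [Fin.lt_def] at hd
    have e1 := extPerm_val π hn hq p hfp (f s) (hbnd s)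
    have e2 := extPerm_val π hn hq p hfp (f (Fin.last b)) (hbnd (Fin.last b))
    rw [Fin.lt_def]
    simp only [Fin.val_mk]
    omega

end extract

noncomputable def fiberEquiv (b : ℕ) {n : ℕ} (hn : 1 ≤ n) (p : ℕ) (hp : p < n) (hpb : p < b) :
    {x : {π : Equiv.Perm (Fin n) // Good b π} // ((x.1.symm (ftop hn) : ℕ)) = p}
    ≃ {σ : Equiv.Perm (Fin (n-1-p)) // Good b σ} where
  toFun x := ⟨extPerm x.1.1 hn x.1.2.1 p x.2,
    ext_Q1 x.1.1 hn x.1.2.1 p x.2, ext_noHasG x.1.1 hn x.1.2.1 p x.2 x.1.2.2⟩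
  invFun σ := ⟨⟨buildPerm hp σ.1, build_Q1 hp σ.1 σ.2.1, build_noHasG hn hp hpb σ.1 σ.2.2⟩,
    buildPerm_symm_top hn hp σ.1⟩
  left_inv := by
    rintro ⟨⟨π, hq, hg⟩, hx⟩
    have hx' : (π.symm (ftop hn) : ℕ) = p := hx
    apply Subtype.ext
    apply Subtype.ext
    apply Equiv.ext
    intro i
    apply Fin.ext
    rw [buildPerm_apply]
    have hi := i.isLt
    rcases lt_trichotomy (i:ℕ) p with h1 | h1 | h1
    · rw [buildFun_lt _ _ i h1]
      exact (D1val hn hq i (by rw [Fin.lt_def]; omega)).symm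
    · rw [buildFun_eq _ _ i h1]
      have hieq : i = π.symm (ftop hn) := Fin.ext (by omega)
      rw [hieq, Equiv.apply_symm_apply]
      rfl
    · have hlt : (i:ℕ)-p-1 < n-1-p := by omega
      have pf : p+1+(((⟨(i:ℕ)-p-1, hlt⟩ : Fin (n-1-p))):ℕ) < n := by
        simp only [Fin.val_mk]; omega
      rw [buildFun_gt _ _ i h1 hlt]
      refine Eq.trans (extPerm_val π hn hq p hx ⟨(i:ℕ)-p-1, hlt⟩ pf) ?_
      exact congrArg (fun z : Fin n => ((π z : Fin n) : ℕ))
        (Fin.ext (by simp only [Fin.val_mk]; omega))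
  right_inv := by
    rintro ⟨σ, hσ⟩
    apply Subtype.ext
    apply Equiv.ext
    intro j
    apply Fin.ext
    have hj := j.isLt
    have pf : p+1+(j:ℕ) < n := by omega
    refine Eq.trans (extPerm_val _ hn _ p _ j pf) ?_
    rw [buildPerm_apply,
      buildFun_gt hp σ ⟨p+1+(j:ℕ), pf⟩ (by simp only [Fin.val_mk]; omega)
        (by simp only [Fin.val_mk]; omega)]
    exact congrArg (fun z : Fin (n-1-p) => ((σ z : Fin (n-1-p)) : ℕ))
      (Fin.ext (by simp only [Fin.val_mk]; omega))

lemma nat_card_sigma {ι : Type} [Fintype ι] (f : ι → Type) [∀ i, Finite (f i)] :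
    Nat.card (Σ i, f i) = ∑ i, Nat.card (f i) := by
  letI : ∀ i, Fintype (f i) := fun i => Fintype.ofFinite _
  simp only [Nat.card_eq_fintype_card]
  exact Fintype.card_sigma

lemma card_step (b n : ℕ) (hb : 1 ≤ b) (hn : 1 ≤ n) :
    Nat.card {π : Equiv.Perm (Fin n) // Good b π} =
      ∑ p ∈ Finset.range (min b n),
        Nat.card {σ : Equiv.Perm (Fin (n-1-p)) // Good b σ} := by
  let c : {π : Equiv.Perm (Fin n) // Good b π} → Fin (min b n) :=
    fun x => ⟨(x.1.symm (ftop hn) : ℕ), lt_min (D1lt hn x.2.1 x.2.2 hb) (x.1.symm (ftop hn)).isLt⟩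
  have h1 : Nat.card {π : Equiv.Perm (Fin n) // Good b π}
      = ∑ p : Fin (min b n), Nat.card {x : {π : Equiv.Perm (Fin n) // Good b π} // c x = p} := by
    rw [← nat_card_sigma]
    exact (Nat.card_congr (Equiv.sigmaFiberEquiv c)).symm
  rw [h1]
  have h2 : ∀ p : Fin (min b n),
      Nat.card {x : {π : Equiv.Perm (Fin n) // Good b π} // c x = p}
      = Nat.card {σ : Equiv.Perm (Fin (n-1-(p:ℕ))) // Good b σ} := by
    intro p
    have hpn : (p:ℕ) < n := by have := p.isLt; omega
    have hpb : (p:ℕ) < b := by have := p.isLt; omega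
    refine Nat.card_congr (Equiv.trans ?_ (fiberEquiv b hn (p:ℕ) hpn hpb))
    exact Equiv.subtypeEquivRight (fun x => by rw [Fin.ext_iff])
  rw [Finset.sum_congr rfl (fun p _ => h2 p)]
  exact Fin.sum_univ_eq_sum_range
    (fun p => Nat.card {σ : Equiv.Perm (Fin (n-1-p)) // Good b σ}) (min b n)

lemma card_good (b : ℕ) (hb : 1 ≤ b) : ∀ n, Nat.card {π : Equiv.Perm (Fin n) // Good b π} = genFib b (n+1) := by
  intro n
  induction n using Nat.strong_induction_on with
  | _ n ih =>
    rcases Nat.eq_zero_or_pos n with rfl | hn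
    · have h1 : Nat.card {π : Equiv.Perm (Fin 0) // Good b π} = 1 := by
        rw [Nat.card_eq_one_iff_unique]
        refine ⟨⟨fun x y => ?_⟩, ⟨⟨1, ⟨fun i => i.elim0, fun ⟨f, _, _, _⟩ => (f 0).elim0⟩⟩⟩⟩
        apply Subtype.ext
        apply Equiv.ext
        intro i
        exact i.elim0
      rw [h1]
      simp [genFib]
    · rw [card_step b n hb hn]
      have hstep : ∀ p ∈ Finset.range (min b n),
          Nat.card {σ : Equiv.Perm (Fin (n-1-p)) // Good b σ} = genFib b (n-p) := by
        intro p hp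
        simp only [Finset.mem_range] at hp
        rw [ih (n-1-p) (by omega)]
        congr 1
        omega
      rw [Finset.sum_congr rfl hstep]
      have hgf : genFib b (n+1) = ∑ i ∈ Finset.range b, genFib b (n-i) := by
        rw [show n+1 = (n-1)+2 by omega, genFib]
        apply Finset.sum_congr rfl
        intro i _
        congr 1
        omega
      rw [hgf]
      apply Finset.sum_subset
      · exact Finset.range_subset_range.mpr (min_le_left b n)
      · intro i hib hinotin
        simp only [Finset.mem_range] at hib hinotin
        rw [show n - i = 0 by omega]
        simp [genFib]

lemma avoid12_iff {n : ℕ} (π : Equiv.Perm (Fin n)) :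
    (PAvoids π p123 ∧ PAvoids π p132) ↔ Q1 π := by
  constructor
  · rintro ⟨h1, h2⟩ i j k hij hjk hij'
    by_contra hk
    have hki : π i < π k := by
      rcases lt_trichotomy (π i) (π k) with h | h | h
      · exact h
      · exact absurd (π.injective h.symm) (by rintro rfl; exact absurd hij (lt_irrefl _ (lt_trans hij hjk)).elim)
      · exact absurd h hk
    have hmono : StrictMono ![i, j, k] := by
      intro s t hst
      fin_cases s <;> fin_cases t <;> simp_all <;> omega
    rcases lt_trichotomy (π j) (π k) with h | h | h
    · apply h1
      refine ⟨![i, j, k], hmono, ?_⟩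
      intro s t
      fin_cases s <;> fin_cases t <;>
        simp [p123, lt_irrefl] <;> omega
    · exact absurd (π.injective h) (by intro hh; subst hh; exact absurd hjk (lt_irrefl _))
    · apply h2
      refine ⟨![i, j, k], hmono, ?_⟩
      have hv : ∀ s t : Fin 3, p132 s < p132 t ↔ (s = 0 ∧ t ≠ 0) ∨ (s = 2 ∧ t = 1) := by decide
      intro s t
      rw [hv]
      fin_cases s <;> fin_cases t <;> simp <;> omega
  · intro h
    constructor
    · rintro ⟨f, hf, hiff⟩
      have h01 : π (f 0) < π (f 1) := (hiff 0 1).2 (by decide)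
      have h02 : π (f 0) < π (f 2) := (hiff 0 2).2 (by decide)
      exact absurd h02 (not_lt.2 (le_of_lt (h (f 0) (f 1) (f 2) (hf (by decide)) (hf (by decide)) h01)))
    · rintro ⟨f, hf, hiff⟩
      have h01 : π (f 0) < π (f 1) := (hiff 0 1).2 (by decide)
      have h02 : π (f 0) < π (f 2) := (hiff 0 2).2 (by decide)
      exact absurd h02 (not_lt.2 (le_of_lt (h (f 0) (f 1) (f 2) (hf (by decide)) (hf (by decide)) h01)))

lemma avoidG_iff {b n : ℕ} (hb : 1 ≤ b) (π : Equiv.Perm (Fin n))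
    (γ : Equiv.Perm (Fin (b + 1)))
    (hγ : ∀ i : Fin (b + 1), (γ i : ℕ) = if (i : ℕ) < b then b - 1 - (i : ℕ) else b) :
    PContains π γ ↔ HasG b π := by
  have hγlt : ∀ s t : Fin (b+1), γ s < γ t ↔
      (((s:ℕ) < b ∧ (t:ℕ) < b ∧ (t:ℕ) < (s:ℕ)) ∨ ((s:ℕ) < b ∧ (t:ℕ) = b)) := by
    intro s t
    rw [Fin.lt_def, hγ s, hγ t]
    have hs := s.isLt
    have ht := t.isLt
    split_ifs with h1 h2 h2 <;> omega
  constructor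
  · rintro ⟨f, hf, hiff⟩
    refine ⟨f, hf, ?_, ?_⟩
    · intro s t hst htb
      exact (hiff t s).2 ((hγlt t s).2 (Or.inl ⟨htb, by omega, hst⟩))
    · intro s hsb
      refine (hiff s (Fin.last b)).2 ((hγlt s (Fin.last b)).2 (Or.inr ⟨hsb, rfl⟩))
  · rintro ⟨f, hf, hdec, hlast⟩
    refine ⟨f, hf, ?_⟩
    intro s t
    rw [hγlt]
    have hs := s.isLt
    have ht := t.isLt
    rcases Nat.lt_or_ge (s:ℕ) b with hsb | hsb
    · rcases Nat.lt_or_ge (t:ℕ) b with htb | htb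
      · constructor
        · intro hlt
          rcases lt_trichotomy (s:ℕ) (t:ℕ) with h | h | h
          · exact absurd hlt (not_lt.2 (le_of_lt (hdec s t (by exact h) htb)))
          · exact absurd hlt (by rw [show s = t from Fin.ext h]; exact lt_irrefl _)
          · exact Or.inl ⟨hsb, htb, h⟩
        · rintro (⟨_, _, h⟩ | ⟨_, h⟩)
          · exact hdec t s h hsb
          · omega
      · have ht' : t = Fin.last b := by rw [Fin.ext_iff]; simp [Fin.last]; omega
        subst ht'
        constructor
        · intro _; exact Or.inr ⟨hsb, by simp [Fin.last]⟩
        · intro _; exact hlast s hsb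
    · have hs' : s = Fin.last b := by rw [Fin.ext_iff]; simp [Fin.last]; omega
      subst hs'
      constructor
      · intro hlt
        rcases Nat.lt_or_ge (t:ℕ) b with htb | htb
        · exact absurd hlt (not_lt.2 (le_of_lt (hlast t htb)))
        · have ht' : t = Fin.last b := by rw [Fin.ext_iff]; simp [Fin.last]; omega
          subst ht'
          exact absurd hlt (lt_irrefl _)
      · rintro (⟨h, _, _⟩ | ⟨h, _⟩) <;> simp [Fin.last] at h <;> omega

/-- Let `γ = γ_{0,b,0}` be the permutation of `{1,…,b+1}` with one-line notation
`b, b-1, …, 2, 1, b+1` (zero-indexed: `γ i = b - 1 - i` for `i < b` and `γ b = b`).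
Then for `n ≥ 1`, `|S_n(123, 132, γ_{0,b,0})| = F_{b,n+1}`. -/
theorem statement5 (b n : ℕ) (hb : 1 ≤ b) (hn : 1 ≤ n)
    (γ : Equiv.Perm (Fin (b + 1)))
    (hγ : ∀ i : Fin (b + 1), (γ i : ℕ) = if (i : ℕ) < b then b - 1 - (i : ℕ) else b) :
    Nat.card {π : Equiv.Perm (Fin n) //
        PAvoids π p123 ∧ PAvoids π p132 ∧ PAvoids π γ} = genFib b (n + 1) := by
  have hiff : ∀ π : Equiv.Perm (Fin n),
      (PAvoids π p123 ∧ PAvoids π p132 ∧ PAvoids π γ) ↔ Good b π := by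
    intro π
    constructor
    · rintro ⟨h1, h2, h3⟩
      exact ⟨(avoid12_iff π).1 ⟨h1, h2⟩, fun hg => h3 ((avoidG_iff hb π γ hγ).2 hg)⟩
    · rintro ⟨hq, hg⟩
      obtain ⟨h1, h2⟩ := (avoid12_iff π).2 hq
      exact ⟨h1, h2, fun hc => hg ((avoidG_iff hb π γ hγ).1 hc)⟩
  rw [Nat.card_congr (Equiv.subtypeEquivRight hiff), card_good b hb n]
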